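/- Let X = ℂ²/Γ where Γ is generated by (0,1), (1,p), (τ,q) with τ ∈ ℍ and p, q ∈ ℝ. Then X is a toroidal group (i.e., admits no non-constant holomorphic functions) if and only if p or q is irrational. -/

import Mathlib

open Complex MeasureTheory Metric Set intervalIntegral Filter Topology Bornology

noncomputable section Stmt10Aux


def stmt10ee (x : ℂ) : ℂ := Complex.exp (2 * Real.pi * Complex.I * x)

lemma stmt10ee_apply (x : ℂ) : stmt10ee x = Complex.exp (2 * Real.pi * Complex.I * x) := rfl

lemma stmt10ee_add (x y : ℂ) : stmt10ee (x + y) = stmt10ee x * stmt10ee y := by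
  simp [stmt10ee, mul_add, Complex.exp_add]

lemma stmt10ee_int (k : ℤ) : stmt10ee k = 1 := by
  rw [stmt10ee, show (2 * (Real.pi:ℂ) * Complex.I * k) = k * (2 * Real.pi * Complex.I) by ring]
  exact Complex.exp_int_mul_two_pi_mul_I k

lemma stmt10ee_zero : stmt10ee 0 = 1 := by simp [stmt10ee]

lemma stmt10ee_abs_real (t : ℝ) : ‖stmt10ee t‖ = 1 := by
  rw [stmt10ee, show (2 * (Real.pi:ℂ) * Complex.I * t) = ((2 * Real.pi * t : ℝ) : ℂ) * Complex.I by
    push_cast; ring]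
  exact Complex.norm_exp_ofReal_mul_I _

lemma stmt10ee_eq_one_iff (x : ℂ) : stmt10ee x = 1 ↔ ∃ k : ℤ, x = k := by
  rw [stmt10ee, Complex.exp_eq_one_iff]
  constructor
  · rintro ⟨k, hk⟩
    refine ⟨k, ?_⟩
    have h2 : (2 * (Real.pi:ℂ) * Complex.I) ≠ 0 := by
      refine mul_ne_zero (mul_ne_zero two_ne_zero ?_) Complex.I_ne_zero
      exact_mod_cast Real.pi_ne_zero
    exact mul_left_cancel₀ h2 (by rw [hk]; ring :
      2 * (Real.pi:ℂ) * Complex.I * x = 2 * (Real.pi:ℂ) * Complex.I * k)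
  · rintro ⟨k, rfl⟩
    exact ⟨k, by ring⟩

lemma stmt10ee_continuous : Continuous stmt10ee :=
  Complex.continuous_exp.comp (continuous_const.mul continuous_id)

lemma stmt10ee_differentiable : Differentiable ℂ stmt10ee :=
  ((differentiable_const _).mul differentiable_id).cexp

lemma stmt10ee_mul_inv (x : ℂ) : stmt10ee x * stmt10ee (-x) = 1 := by
  rw [← stmt10ee_add]; simp [stmt10ee_zero]




/-- A holomorphic function invariant under all real translations is constant. -/
lemma stmt10_const_of_real_shift {g : ℂ → ℂ} (hg : Differentiable ℂ g)
    (h : ∀ (w : ℂ) (s : ℝ), g (w + s) = g w) : ∀ w, g w = g 0 := by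
  have hderiv : ∀ w, deriv g w = 0 := by
    intro w
    have h1 : HasDerivAt (fun u : ℂ => g (w + u)) (deriv g w) 0 := by
      have hgw : HasDerivAt g (deriv g w) (w + id (0:ℂ)) := by
        simpa using (hg w).hasDerivAt
      have := hgw.comp (0:ℂ) ((hasDerivAt_id (0:ℂ)).const_add w)
      simpa [Function.comp_def] using this
    have h2 : HasDerivAt (fun s : ℝ => g (w + (s:ℂ))) (deriv g w) (0:ℝ) := by
      exact HasDerivAt.comp_ofReal (by rw [Complex.ofReal_zero]; exact h1)
    have h3 : (fun s : ℝ => g (w + (s:ℂ))) = fun _ => g w := funext fun s => h w s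
    rw [h3] at h2
    exact (h2.unique (hasDerivAt_const _ _))
  intro w
  exact is_const_of_deriv_eq_zero hg hderiv w 0



/-- Differentiability of a parametric interval integral of a holomorphic family. -/
lemma stmt10_diff_param {g : ℂ × ℝ → ℂ} (hgc : Continuous g)
    (hgd : ∀ t : ℝ, Differentiable ℂ fun x => g (x, t)) :
    Differentiable ℂ fun x => ∫ t in (0:ℝ)..1, g (x, t) := by
  intro x₀
  obtain ⟨C, hC⟩ : ∃ C, ∀ y ∈ (closedBall x₀ 2 ×ˢ Icc (0:ℝ) 1 : Set (ℂ × ℝ)), ‖g y‖ ≤ C :=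
    ((isCompact_closedBall x₀ 2).prod isCompact_Icc).exists_bound_of_continuousOn
      hgc.continuousOn
  set F' : ℂ → ℝ → ℂ := fun x t => deriv (fun y => g (y, t)) x with hF'
  have hmeas : ∀ x : ℂ, AEStronglyMeasurable (fun t => g (x, t))
      (volume.restrict (Set.uIoc (0:ℝ) 1)) := fun x =>
    (hgc.comp (by continuity : Continuous fun t : ℝ => ((x, t) : ℂ × ℝ))).aestronglyMeasurable
  have key := intervalIntegral.hasDerivAt_integral_of_dominated_loc_of_deriv_le
    (F := fun x t => g (x, t)) (F' := F') (x₀ := x₀) (a := (0:ℝ)) (b := 1)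
    (bound := fun _ => C) (s := ball x₀ 1) (ball_mem_nhds x₀ one_pos)
    (Filter.Eventually.of_forall fun x => hmeas x)
    ((hgc.comp (by continuity : Continuous fun t : ℝ => ((x₀, t) : ℂ × ℝ))).intervalIntegrable 0 1)
    ?_ ?_ (intervalIntegrable_const) ?_
  · exact key.2.differentiableAt
  · -- measurability of `F' x₀` : pointwise limit of difference quotients
    have hne : ∀ k : ℕ, ((k:ℂ) + 1)⁻¹ ≠ 0 := fun k =>
      inv_ne_zero (Nat.cast_add_one_ne_zero k)
    have htend : ∀ t : ℝ, Filter.Tendsto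
        (fun k : ℕ => ((k:ℂ) + 1) * (g (x₀ + ((k:ℂ) + 1)⁻¹, t) - g (x₀, t)))
        atTop (𝓝 (F' x₀ t)) := by
      intro t
      have hd : HasDerivAt (fun y => g (y, t)) (F' x₀ t) x₀ := (hgd t x₀).hasDerivAt
      rw [hasDerivAt_iff_tendsto_slope] at hd
      have hseq : Filter.Tendsto (fun k : ℕ => x₀ + ((k:ℂ) + 1)⁻¹) atTop (𝓝[≠] x₀) := by
        rw [tendsto_nhdsWithin_iff]
        constructor
        · have hr : Filter.Tendsto (fun k : ℕ => ((k:ℝ) + 1)⁻¹) atTop (𝓝 0) := by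
            simpa using tendsto_one_div_add_atTop_nhds_zero_nat (𝕜 := ℝ)
          have hc : Filter.Tendsto (fun k : ℕ => (((k:ℝ) + 1)⁻¹ : ℂ)) atTop (𝓝 0) := by
            have h0 := (Complex.continuous_ofReal.tendsto 0).comp hr
            simpa [Function.comp_def] using h0
          have : Filter.Tendsto (fun k : ℕ => ((k:ℂ) + 1)⁻¹) atTop (𝓝 0) := by
            refine hc.congr fun k => ?_
            push_cast
            ring
          simpa using tendsto_const_nhds.add this
        · refine Filter.Eventually.of_forall fun k => ?_
          simp only [Set.mem_compl_iff, Set.mem_singleton_iff]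
          intro hk
          exact hne k (by simpa using hk)
      have := hd.comp hseq
      refine this.congr fun k => ?_
      simp only [Function.comp_apply]
      rw [slope_def_field]
      rw [add_sub_cancel_left, div_inv_eq_mul]
      ring
    apply aestronglyMeasurable_of_tendsto_ae (u := atTop) (f := fun k : ℕ => fun t =>
      ((k:ℂ) + 1) * (g (x₀ + ((k:ℂ) + 1)⁻¹, t) - g (x₀, t)))
    · intro k
      exact ((continuous_const.mul ((hgc.comp (by continuity)).sub
        (hgc.comp (by continuity))))).aestronglyMeasurable
    · exact Filter.Eventually.of_forall fun t => htend t
  · -- bound on the derivative via Cauchy estimates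
    refine Filter.Eventually.of_forall fun t ht x hx => ?_
    have ht' : t ∈ Icc (0:ℝ) 1 := by
      rw [Set.uIoc_of_le (by norm_num : (0:ℝ) ≤ 1)] at ht
      exact ⟨ht.1.le, ht.2⟩
    have hcau := Complex.norm_deriv_le_of_forall_mem_sphere_norm_le (c := x) (R := 1) (C := C)
      one_pos ((hgd t).diffContOnCl) (fun z hz => hC (z, t) ?_)
    · simpa using hcau
    · refine ⟨mem_closedBall.2 ?_, ht'⟩
      have h1 : dist z x = 1 := mem_sphere.1 hz
      have h2 : dist x x₀ < 1 := mem_ball.1 hx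
      calc dist z x₀ ≤ dist z x + dist x x₀ := dist_triangle _ _ _
        _ ≤ 2 := by rw [h1]; linarith
  · -- differentiability on the ball
    exact Filter.Eventually.of_forall fun t _ x _ => (hgd t x).hasDerivAt

lemma stmt10_easy (p q : ℝ) (rp rq : ℚ) (hp : (rp : ℝ) = p) (hq : (rq : ℝ) = q) :
    ∃ f : ℂ × ℂ → ℂ, Differentiable ℂ f ∧
      (∀ z w : ℂ, f (z, w + 1) = f (z, w)) ∧
      (∀ z w : ℂ, f (z + 1, w + p) = f (z, w)) ∧
      (∀ τ : ℂ, ∀ z w : ℂ, f (z + τ, w + q) = f (z, w)) ∧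
      ¬ ∃ c : ℂ, f = fun _ => c := by
  set N : ℕ := rp.den * rq.den with hN
  have hNpos : 0 < N := Nat.mul_pos rp.pos rq.pos
  have hNp : ((N:ℝ)) * p = ((rp.num * rq.den : ℤ) : ℝ) := by
    rw [← hp, hN]
    push_cast
    rw [Rat.cast_def]
    have hd : (rp.den : ℝ) ≠ 0 := Nat.cast_ne_zero.2 rp.den_nz
    field_simp
  have hNq : ((N:ℝ)) * q = ((rq.num * rp.den : ℤ) : ℝ) := by
    rw [← hq, hN]
    push_cast
    rw [Rat.cast_def]
    have hd : (rq.den : ℝ) ≠ 0 := Nat.cast_ne_zero.2 rq.den_nz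
    field_simp
  have hNpC : ((N:ℂ)) * (p:ℂ) = ((rp.num * rq.den : ℤ) : ℂ) := by
    exact_mod_cast congrArg Complex.ofReal hNp
  have hNqC : ((N:ℂ)) * (q:ℂ) = ((rq.num * rp.den : ℤ) : ℂ) := by
    exact_mod_cast congrArg Complex.ofReal hNq
  refine ⟨fun x => stmt10ee ((N:ℂ) * x.2), ?_, ?_, ?_, ?_, ?_⟩
  · exact Complex.differentiable_exp.comp
      ((differentiable_const _).mul ((differentiable_const _).mul differentiable_snd))
  · intro z w
    simp only
    rw [mul_add, stmt10ee_add, mul_one, show ((N:ℂ)) = ((N:ℤ):ℂ) by push_cast; ring,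
      stmt10ee_int, mul_one]
  · intro z w
    simp only
    rw [mul_add, stmt10ee_add, hNpC, stmt10ee_int, mul_one]
  · intro τ z w
    simp only
    rw [mul_add, stmt10ee_add, hNqC, stmt10ee_int, mul_one]
  · rintro ⟨cc, hcc⟩
    have h0 : stmt10ee ((N:ℂ) * (0:ℂ)) = cc := by
      have := congrFun hcc ((0:ℂ), (0:ℂ))
      simpa using this
    have hI : stmt10ee ((N:ℂ) * Complex.I) = cc := by
      have := congrFun hcc ((0:ℂ), Complex.I)
      simpa using this
    have h1 : stmt10ee ((N:ℂ) * (0:ℂ)) = 1 := by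
      rw [mul_zero, stmt10ee_zero]
    have h2 : stmt10ee ((N:ℂ) * Complex.I) = ((Real.exp (-(2 * Real.pi * N)) : ℝ) : ℂ) := by
      rw [stmt10ee]
      rw [show 2 * (Real.pi:ℂ) * Complex.I * ((N:ℂ) * Complex.I)
          = 2 * (Real.pi:ℂ) * (N:ℂ) * (Complex.I * Complex.I) from by ring, Complex.I_mul_I]
      rw [show (2 * (Real.pi:ℂ) * (N:ℂ) * -1) = ((-(2 * Real.pi * N) : ℝ) : ℂ) from by push_cast; ring,
        ← Complex.ofReal_exp]
    have : ((Real.exp (-(2 * Real.pi * N)) : ℝ) : ℂ) = 1 := by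
      rw [← h2, hI, ← h0, h1]
    rw [Complex.ofReal_eq_one, Real.exp_eq_one_iff] at this
    have hNpos' : (0:ℝ) < 2 * Real.pi * N := by
      have : (0:ℝ) < (N:ℝ) := Nat.cast_pos.2 hNpos
      positivity
    linarith [this]

set_option maxHeartbeats 1000000 in
theorem stmt10_hard (p q : ℝ) (τ : ℂ) (hτ : 0 < τ.im) (hpq : Irrational p ∨ Irrational q)
    (f : ℂ × ℂ → ℂ) (hf : Differentiable ℂ f)
    (h1 : ∀ z w : ℂ, f (z, w + 1) = f (z, w))
    (h2 : ∀ z w : ℂ, f (z + 1, w + p) = f (z, w))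
    (h3 : ∀ z w : ℂ, f (z + τ, w + q) = f (z, w)) :
    ∃ c : ℂ, f = fun _ => c := by
  have hfc : Continuous f := hf.continuous
  set A : ℤ → ℂ → ℂ → ℂ :=
    fun n z w => ∫ t in (0:ℝ)..1, stmt10ee (-(n * t)) * f (z, w + t) with hA
  set c : ℤ → ℂ → ℂ := fun n z => A n z 0 with hc
  -- differentiability in w
  have hAw : ∀ (n : ℤ) (z : ℂ), Differentiable ℂ fun w => A n z w := by
    intro n z
    refine stmt10_diff_param (g := fun x : ℂ × ℝ => stmt10ee (-((n:ℂ) * (x.2:ℂ))) * f (z, x.1 + (x.2:ℂ))) ?_ ?_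
    · exact (stmt10ee_continuous.comp
        ((continuous_const.mul (Complex.continuous_ofReal.comp continuous_snd)).neg)).mul
        (hfc.comp (continuous_const.prodMk
          (continuous_fst.add (Complex.continuous_ofReal.comp continuous_snd))))
    · intro t
      show Differentiable ℂ fun x : ℂ => stmt10ee (-((n:ℂ) * (t:ℂ))) * f (z, x + (t:ℂ))
      exact (differentiable_const _).mul
        (hf.comp ((differentiable_const z).prodMk (differentiable_id.add_const _)))
  -- differentiability in z
  have hAz : ∀ (n : ℤ) (w : ℂ), Differentiable ℂ fun z => A n z w := by
    intro n w
    refine stmt10_diff_param (g := fun x : ℂ × ℝ => stmt10ee (-((n:ℂ) * (x.2:ℂ))) * f (x.1, w + (x.2:ℂ))) ?_ ?_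
    · exact (stmt10ee_continuous.comp
        ((continuous_const.mul (Complex.continuous_ofReal.comp continuous_snd)).neg)).mul
        (hfc.comp (continuous_fst.prodMk
          (continuous_const.add (Complex.continuous_ofReal.comp continuous_snd))))
    · intro t
      show Differentiable ℂ fun x : ℂ => stmt10ee (-((n:ℂ) * (t:ℂ))) * f (x, w + (t:ℂ))
      exact (differentiable_const _).mul
        (hf.comp (differentiable_id.prodMk (differentiable_const _)))
  -- shift in w by a real number
  have hshift : ∀ (n : ℤ) (z w : ℂ) (s : ℝ),
      A n z (w + s) = stmt10ee (n * s) * A n z w := by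
    intro n z w s
    set G : ℝ → ℂ := fun u => stmt10ee (-(n * u)) * f (z, w + u) with hG
    have hGper : Function.Periodic G 1 := by
      intro u
      have e1 : (-((n:ℂ) * (u + 1 : ℝ))) = -((n:ℂ) * u) + (-n : ℤ) := by push_cast; ring
      have e2 : w + ((u + 1 : ℝ) : ℂ) = (w + u) + 1 := by push_cast; ring
      rw [hG]
      simp only
      rw [e1, stmt10ee_add, stmt10ee_int, mul_one, e2, h1]
    have step1 : A n z (w + s) = ∫ t in (0:ℝ)..1, stmt10ee (n * s) * G (s + t) := by
      rw [hA]
      simp only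
      refine intervalIntegral.integral_congr fun t _ => ?_
      rw [hG]
      simp only
      rw [← mul_assoc, ← stmt10ee_add]
      congr 2
      · push_cast; ring
      · push_cast; ring
    rw [step1, intervalIntegral.integral_const_mul]
    congr 1
    have := intervalIntegral.integral_comp_add_left (a := (0:ℝ)) (b := 1) G s
    rw [this]
    have h2' := hGper.intervalIntegral_add_eq s 0
    simpa using h2'
  -- A n z w = stmt10ee (n w) * c n z
  have hB : ∀ (n : ℤ) (z w : ℂ), A n z w = stmt10ee (n * w) * c n z := by
    intro n z w
    set B : ℂ → ℂ := fun w => stmt10ee (-(n * w)) * A n z w with hBdef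
    have hBd : Differentiable ℂ B :=
      (stmt10ee_differentiable.comp ((differentiable_const ((n:ℂ))).mul differentiable_id).neg).mul
        (hAw n z)
    have hBshift : ∀ (w : ℂ) (s : ℝ), B (w + s) = B w := by
      intro w s
      rw [hBdef]
      simp only
      rw [hshift n z w s, ← mul_assoc, ← stmt10ee_add]
      congr 2
      ring
    have hBconst := stmt10_const_of_real_shift hBd hBshift
    have h0 : B w = c n z := by
      rw [hBconst w, hBdef]
      simp [stmt10ee_zero, hc]
    have : stmt10ee (n * w) * B w = A n z w := by
      rw [hBdef]
      simp only
      rw [← mul_assoc, stmt10ee_mul_inv, one_mul]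
    rw [← this, h0]
  -- lattice relations for c
  have hc1 : ∀ (n : ℤ) (z : ℂ), c n (z + 1) = stmt10ee (-(n * p)) * c n z := by
    intro n z
    have e0 : c n (z + 1) = A n z ((0:ℂ) + ((-p : ℝ) : ℂ)) := by
      rw [hc, hA]
      simp only
      refine intervalIntegral.integral_congr fun t _ => ?_
      congr 1
      have : f (z + 1, ((0:ℂ) + ((-p:ℝ):ℂ) + t) + p) = f (z, (0:ℂ) + ((-p:ℝ):ℂ) + t) := h2 z _
      rw [← this]
      congr 1
      push_cast
      ring
    rw [e0, hshift n z 0 (-p)]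
    rw [hc]
    congr 1
    push_cast
    ring
  have hcτ : ∀ (n : ℤ) (z : ℂ), c n (z + τ) = stmt10ee (-(n * q)) * c n z := by
    intro n z
    have e0 : c n (z + τ) = A n z ((0:ℂ) + ((-q : ℝ) : ℂ)) := by
      rw [hc, hA]
      simp only
      refine intervalIntegral.integral_congr fun t _ => ?_
      congr 1
      have : f (z + τ, ((0:ℂ) + ((-q:ℝ):ℂ) + t) + q) = f (z, (0:ℂ) + ((-q:ℝ):ℂ) + t) := h3 z _
      rw [← this]
      congr 1
      push_cast
      ring
    rw [e0, hshift n z 0 (-q)]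
    rw [hc]
    congr 1
    push_cast
    ring
  -- boundedness and Liouville: each c n is constant
  have hconst : ∀ (n : ℤ) (z : ℂ), c n z = c n 0 := by
    intro n
    set φ : ℂ → ℝ := fun z => ‖c n z‖ with hφ
    have hφ1 : Function.Periodic φ 1 := by
      intro z
      rw [hφ]
      simp only
      rw [hc1 n z, norm_mul]
      have : (-(↑n * ↑p) : ℂ) = ((-(n * p) : ℝ) : ℂ) := by push_cast; ring
      rw [this, stmt10ee_abs_real, one_mul]
    have hφτ : Function.Periodic φ τ := by
      intro z
      rw [hφ]
      simp only
      rw [hcτ n z, norm_mul]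
      have : (-(↑n * ↑q) : ℂ) = ((-(n * q) : ℝ) : ℂ) := by push_cast; ring
      rw [this, stmt10ee_abs_real, one_mul]
    -- reduce any z to the fundamental domain
    have hred : ∀ z : ℂ, ∃ z₀ : ℂ, z₀.re ∈ Icc (0:ℝ) 1 ∧ z₀.im ∈ Icc 0 τ.im ∧ φ z = φ z₀ := by
      intro z
      set k : ℤ := ⌊z.im / τ.im⌋ with hk
      set z₁ : ℂ := z - (k : ℂ) * τ with hz₁
      set m : ℤ := ⌊z₁.re⌋ with hm
      set z₀ : ℂ := z₁ - (m : ℂ) with hz₀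
      have him : z₁.im = z.im - k * τ.im := by
        rw [hz₁]
        simp [Complex.sub_im, Complex.mul_im]
      have him0 : (0:ℝ) ≤ z₁.im := by
        rw [him, sub_nonneg]
        rw [hk]
        have := Int.floor_le (z.im / τ.im)
        calc (⌊z.im / τ.im⌋ : ℝ) * τ.im ≤ (z.im / τ.im) * τ.im := by
              exact mul_le_mul_of_nonneg_right this hτ.le
          _ = z.im := by field_simp
      have him1 : z₁.im ≤ τ.im := by
        rw [him]
        have := Int.lt_floor_add_one (z.im / τ.im)
        have h' : z.im < (k + 1 : ℝ) * τ.im := by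
          rw [hk]
          calc z.im = (z.im / τ.im) * τ.im := by field_simp
            _ < (↑⌊z.im / τ.im⌋ + 1) * τ.im := by
                exact mul_lt_mul_of_pos_right this hτ
        nlinarith
      have hre : z₀.re = Int.fract z₁.re := by
        rw [hz₀, Int.fract]
        simp [Complex.sub_re, hm]
      refine ⟨z₀, ?_, ?_, ?_⟩
      · rw [hre]
        exact ⟨Int.fract_nonneg _, (Int.fract_lt_one _).le⟩
      · have : z₀.im = z₁.im := by rw [hz₀]; simp [Complex.sub_im]
        rw [this]
        exact ⟨him0, him1⟩
      · have e1 : φ z = φ z₁ := by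
          have := (hφτ.int_mul k) z₁
          have hzz : z₁ + (k:ℂ) * τ = z := by rw [hz₁]; ring
          rw [hzz] at this
          exact this
        have e2 : φ z₁ = φ z₀ := by
          have := (hφ1.int_mul m) z₀
          have hzz : z₀ + (m:ℂ) * 1 = z₁ := by rw [hz₀]; ring
          rw [hzz] at this
          exact this
        rw [e1, e2]
    -- bound on the fundamental domain
    set K : Set ℂ := {w : ℂ | w.re ∈ Icc (0:ℝ) 1 ∧ w.im ∈ Icc 0 τ.im} with hK
    have hKcompact : IsCompact K := by
      have hclosed : IsClosed K := by
        have : K = Complex.re ⁻¹' Icc (0:ℝ) 1 ∩ Complex.im ⁻¹' Icc 0 τ.im := rfl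
        rw [this]
        exact (isClosed_Icc.preimage Complex.continuous_re).inter
          (isClosed_Icc.preimage Complex.continuous_im)
      have hbdd : IsBounded K := by
        apply (isBounded_closedBall (x := (0:ℂ)) (r := 1 + τ.im)).subset
        intro w hw
        obtain ⟨hwre, hwim⟩ := hw
        rw [mem_closedBall, Complex.dist_eq, sub_zero]
        calc ‖w‖ ≤ |w.re| + |w.im| := Complex.norm_le_abs_re_add_abs_im w
          _ ≤ 1 + τ.im := by
              rw [_root_.abs_of_nonneg hwre.1, _root_.abs_of_nonneg hwim.1]
              exact add_le_add hwre.2 hwim.2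
      exact Metric.isCompact_of_isClosed_isBounded hclosed hbdd
    obtain ⟨C, hCb⟩ := hKcompact.exists_bound_of_continuousOn
      ((hAz n 0).continuous.continuousOn : ContinuousOn (c n) K)
    have hbound : ∀ z, ‖c n z‖ ≤ C := by
      intro z
      obtain ⟨z₀, hre, him, heq⟩ := hred z
      have : φ z₀ ≤ C := by
        have := hCb z₀ ⟨hre, him⟩
        simpa [hφ] using this
      calc ‖c n z‖ = φ z := rfl
        _ = φ z₀ := heq
        _ ≤ C := this
    intro z
    exact (hAz n 0).apply_eq_apply_of_bounded
      (isBounded_iff_forall_norm_le.2 ⟨C, by rintro _ ⟨z, rfl⟩; exact hbound z⟩) z 0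
  -- vanishing of higher coefficients
  have hvanish : ∀ n : ℤ, n ≠ 0 → c n 0 = 0 := by
    intro n hn
    by_contra hne
    rcases hpq with hp | hq
    · have key : c n (0 + 1) = stmt10ee (-(n * p)) * c n 0 := hc1 n 0
      rw [hconst n (0 + 1)] at key
      have hone : stmt10ee (-(↑n * ↑p)) = 1 := by
        refine mul_right_cancel₀ hne ?_
        rw [one_mul]
        exact key.symm
      rw [stmt10ee_eq_one_iff] at hone
      obtain ⟨k, hk⟩ := hone
      have : ((-(n * p) : ℝ) : ℂ) = ((k : ℝ) : ℂ) := by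
        push_cast
        push_cast at hk
        linear_combination hk
      have hreal : -((n:ℝ) * p) = (k:ℝ) := by exact_mod_cast this
      have : ((n:ℝ) * p) = ((-k : ℤ) : ℝ) := by push_cast; linarith
      exact (hp.intCast_mul hn).ne_int (-k) this
    · have key : c n (0 + τ) = stmt10ee (-(n * q)) * c n 0 := hcτ n 0
      rw [hconst n (0 + τ)] at key
      have hone : stmt10ee (-(↑n * ↑q)) = 1 := by
        refine mul_right_cancel₀ hne ?_
        rw [one_mul]
        exact key.symm
      rw [stmt10ee_eq_one_iff] at hone
      obtain ⟨k, hk⟩ := hone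
      have : ((-(n * q) : ℝ) : ℂ) = ((k : ℝ) : ℂ) := by
        push_cast
        push_cast at hk
        linear_combination hk
      have hreal : -((n:ℝ) * q) = (k:ℝ) := by exact_mod_cast this
      have : ((n:ℝ) * q) = ((-k : ℤ) : ℝ) := by push_cast; linarith
      exact (hq.intCast_mul hn).ne_int (-k) this
  -- Fourier uniqueness: f is constant
  have hfinal : ∀ z w : ℂ, f (z, w) = c 0 0 := by
    intro z w
    haveI : Fact ((0:ℝ) < 1) := ⟨one_pos⟩
    set g : ℝ → ℂ := fun t => f (z, w + t) with hg
    have hgper : g 0 = g (0 + 1) := by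
      rw [hg]
      simp only
      have : w + ((0 + 1 : ℝ) : ℂ) = (w + 0) + 1 := by push_cast; ring
      rw [this, h1]
      norm_num
    have hgc : Continuous g := hfc.comp
      (continuous_const.prodMk (continuous_const.add Complex.continuous_ofReal))
    set G : AddCircle (1:ℝ) → ℂ := AddCircle.liftIco 1 0 g with hGdef
    have hGcont : Continuous G := AddCircle.liftIco_continuous hgper hgc.continuousOn
    have hcoeff : ∀ n : ℤ, fourierCoeff G n = A n z w := by
      intro n
      rw [hGdef, fourierCoeff_liftIco_eq, fourierCoeffOn_eq_integral]
      rw [hA]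
      simp only [zero_add, sub_zero, one_smul, smul_eq_mul]
      rw [one_div_one, one_smul]
      refine intervalIntegral.integral_congr fun t _ => ?_
      rw [fourier_coe_apply]
      congr 1
      rw [stmt10ee_apply]
      congr 1
      push_cast
      ring
    have hzero : ∀ n : ℤ, n ≠ 0 → fourierCoeff G n = 0 := by
      intro n hn
      rw [hcoeff n, hB n z w, hconst n z, hvanish n hn, mul_zero]
    set Gc : C(AddCircle (1:ℝ), ℂ) := ⟨G, hGcont⟩ with hGc
    have hsummable : Summable (fourierCoeff (Gc : AddCircle (1:ℝ) → ℂ)) := by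
      refine (hasSum_single (0:ℤ) fun b hb => ?_).summable
      exact hzero b hb
    have hsum := has_pointwise_sum_fourier_series_of_summable hsummable
      (((0:ℝ) : AddCircle (1:ℝ)))
    have hsingle : HasSum
        (fun i : ℤ => fourierCoeff (Gc : AddCircle (1:ℝ) → ℂ) i •
          fourier i (((0:ℝ) : AddCircle (1:ℝ))))
        (fourierCoeff (Gc : AddCircle (1:ℝ) → ℂ) 0 • fourier 0 (((0:ℝ) : AddCircle (1:ℝ)))) := by
      refine hasSum_single (0:ℤ) fun b hb => ?_
      rw [show fourierCoeff ((Gc : AddCircle (1:ℝ) → ℂ)) b = (0:ℂ) from hzero b hb, zero_smul]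
    have hGval : Gc (((0:ℝ) : AddCircle (1:ℝ))) =
        fourierCoeff (Gc : AddCircle (1:ℝ) → ℂ) 0 • fourier 0 (((0:ℝ) : AddCircle (1:ℝ))) :=
      hsum.unique hsingle
    have e1 : Gc (((0:ℝ) : AddCircle (1:ℝ))) = f (z, w) := by
      have : G (((0:ℝ) : AddCircle (1:ℝ))) = g 0 :=
        AddCircle.liftIco_coe_apply (by norm_num : (0:ℝ) ∈ Ico (0:ℝ) (0 + 1))
      rw [hGc]
      simp only [ContinuousMap.coe_mk]
      rw [this, hg]
      simp
    have e2 : fourierCoeff (Gc : AddCircle (1:ℝ) → ℂ) 0 = c 0 0 := by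
      have : fourierCoeff (Gc : AddCircle (1:ℝ) → ℂ) 0 = A 0 z w := hcoeff 0
      rw [this, hB 0 z w, hconst 0 z]
      simp [stmt10ee_zero]
    rw [e1, e2] at hGval
    rw [hGval]
    simp [fourier_zero]
  exact ⟨c 0 0, funext fun zw => by rw [show zw = (zw.1, zw.2) from rfl, hfinal zw.1 zw.2]⟩

end Stmt10Aux

/-- Let `X = ℂ²/Γ` with `Γ` generated by `(0,1)`, `(1,p)`, `(τ,q)`, `τ` in the
upper half plane, `p, q ∈ ℝ`. Then `X` is a toroidal group — every holomorphic function on `X`,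
i.e. every entire `Γ`-periodic function on `ℂ²`, is constant — if and only if `p` or `q` is
irrational. -/
theorem stmt10 (p q : ℝ) (τ : ℂ) (hτ : 0 < τ.im) :
    (∀ f : ℂ × ℂ → ℂ, Differentiable ℂ f →
        (∀ z w : ℂ, f (z, w + 1) = f (z, w)) →
        (∀ z w : ℂ, f (z + 1, w + p) = f (z, w)) →
        (∀ z w : ℂ, f (z + τ, w + q) = f (z, w)) →
        ∃ c : ℂ, f = fun _ => c) ↔
      (Irrational p ∨ Irrational q) := by
  constructor
  · intro H
    by_contra hcon
    push_neg at hcon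
    obtain ⟨hp, hq⟩ := hcon
    have hp' : p ∈ Set.range ((↑) : ℚ → ℝ) := not_not.mp hp
    have hq' : q ∈ Set.range ((↑) : ℚ → ℝ) := not_not.mp hq
    obtain ⟨rp, hrp⟩ := hp'
    obtain ⟨rq, hrq⟩ := hq'
    obtain ⟨f, hfd, hf1, hf2, hf3, hfnc⟩ := stmt10_easy p q rp rq hrp hrq
    exact hfnc (H f hfd hf1 hf2 (hf3 τ))
  · intro hpq f hf h1 h2 h3
    exact stmt10_hard p q τ hτ hpq f hf h1 h2 h3
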